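/- Let M be a matroid on a finite ground set E with base family 𝓑. Then the adjacency family A(𝓑) satisfies the basis exchange property: for all U, V ∈ A(𝓑) and every b ∈ U \ V, there exists c ∈ V \ U such that (U \ {b}) ∪ {c} ∈ A(𝓑). -/

import Mathlib

/-- Two sets are *adjacent* if each has exactly one element outside the other. -/
def AdjacentSets {α : Type*} (B C : Set α) : Prop :=
  (B \ C).ncard = 1 ∧ (C \ B).ncard = 1

/-- The *adjacency family* of a family of sets: all unions of adjacent pairs of members. -/
def adjFam {α : Type*} (𝓕 : Set (Set α)) : Set (Set α) :=
  {U | ∃ B ∈ 𝓕, ∃ C ∈ 𝓕, AdjacentSets B C ∧ U = B ∪ C}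

open Set

/-- Auxiliary: inserting a non-loop element outside a base gives a member of the
adjacency family of the base family. -/
lemma insert_mem_adjFam {α : Type*} {M : Matroid α} {B : Set α} {x : α}
    (hB : M.IsBase B) (hx : x ∉ B) (hxi : M.Indep {x}) :
    insert x B ∈ adjFam {B | M.IsBase B} := by
  have hxE : x ∈ M.E := hxi.subset_ground rfl
  have hWE : insert x B ⊆ M.E := insert_subset hxE hB.subset_ground
  have hWsp : M.Spanning (insert x B) := hB.spanning.superset (subset_insert _ _) hWE
  obtain ⟨B2, hB2basis, hxB2⟩ :=
    hxi.subset_isBasis_of_subset (singleton_subset_iff.2 (mem_insert x B)) hWE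
  have hB2sp : M.Spanning B2 :=
    ⟨by rw [hB2basis.closure_eq_closure, hWsp.closure_eq], hB2basis.indep.subset_ground⟩
  have hB2 : M.IsBase B2 := hB2basis.indep.isBase_of_spanning hB2sp
  have hx2 : x ∈ B2 := hxB2 rfl
  have hd : B2 \ B = {x} := by
    apply subset_antisymm
    · intro y hy
      rcases hB2basis.subset hy.1 with h | h
      · exact h
      · exact absurd h hy.2
    · exact singleton_subset_iff.2 ⟨hx2, hx⟩
  have hcard : (B \ B2).encard = 1 := by
    rw [hB.encard_diff_comm hB2, hd, encard_singleton]
  refine ⟨B, hB, B2, hB2, ⟨?_, ?_⟩, ?_⟩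
  · rw [ncard_def, hcard]; rfl
  · rw [hd, ncard_singleton]
  · apply subset_antisymm
    · exact insert_subset (Or.inr hx2) subset_union_left
    · exact union_subset (subset_insert _ _) hB2basis.subset

/-- Let `M` be a matroid on a finite ground set `E` with base family `𝓑`.
Then the adjacency family `A(𝓑)` satisfies the basis exchange property: for all
`U, V ∈ A(𝓑)` and every `b ∈ U \ V`, there is `c ∈ V \ U` with `(U \ {b}) ∪ {c} ∈ A(𝓑)`. -/
theorem adjFam_exchange {α : Type*} (M : Matroid α) (hfin : M.E.Finite)
    (𝓑 : Set (Set α)) (h𝓑 : 𝓑 = {B | M.IsBase B}) :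
    ∀ U ∈ adjFam 𝓑, ∀ V ∈ adjFam 𝓑, ∀ b ∈ U \ V,
      ∃ c ∈ V \ U, insert c (U \ {b}) ∈ adjFam 𝓑 := by
  subst h𝓑
  intro U hU V hV b hb
  obtain ⟨B0, hB0, C0, hC0, ⟨-, hCB0⟩, hUeq⟩ := hU
  obtain ⟨B1, hB1, C1, hC1, ⟨-, hCB1⟩, hVeq⟩ := hV
  replace hB0 : M.IsBase B0 := hB0
  replace hC0 : M.IsBase C0 := hC0
  replace hB1 : M.IsBase B1 := hB1
  replace hC1 : M.IsBase C1 := hC1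
  obtain ⟨u, hu⟩ := ncard_eq_one.1 hCB0
  obtain ⟨v, hv⟩ := ncard_eq_one.1 hCB1
  have huB0 : u ∉ B0 := by
    have : u ∈ C0 \ B0 := hu ▸ rfl
    exact this.2
  have hvB1 : v ∉ B1 := by
    have : v ∈ C1 \ B1 := hv ▸ rfl
    exact this.2
  have hU1 : U = insert u B0 := by
    rw [hUeq, ← union_diff_self, hu, union_singleton]
  have hV1 : V = insert v B1 := by
    rw [hVeq, ← union_diff_self, hv, union_singleton]
  have hUE : U ⊆ M.E := hUeq ▸ union_subset hB0.subset_ground hC0.subset_ground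
  have hVE : V ⊆ M.E := hVeq ▸ union_subset hB1.subset_ground hC1.subset_ground
  have hUfin : U.Finite := hfin.subset hUE
  have hVfin : V.Finite := hfin.subset hVE
  have hUspan : M.Spanning U := hB0.spanning.superset (hUeq ▸ subset_union_left) hUE
  have hVspan : M.Spanning V := hB1.spanning.superset (hVeq ▸ subset_union_left) hVE
  have hUind : ∀ e ∈ U, M.Indep {e} := by
    intro e he
    rw [hUeq] at he
    rcases he with h | h
    · exact hB0.indep.subset (singleton_subset_iff.2 h)
    · exact hC0.indep.subset (singleton_subset_iff.2 h)
  have hVind : ∀ e ∈ V, M.Indep {e} := by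
    intro e he
    rw [hVeq] at he
    rcases he with h | h
    · exact hB1.indep.subset (singleton_subset_iff.2 h)
    · exact hC1.indep.subset (singleton_subset_iff.2 h)
  have hUcard : U.ncard = B0.ncard + 1 := by
    rw [hU1, ncard_insert_of_notMem huB0 (hfin.subset hB0.subset_ground)]
  have hVcard : V.ncard = B1.ncard + 1 := by
    rw [hV1, ncard_insert_of_notMem hvB1 (hfin.subset hB1.subset_ground)]
  have hB01 : B0.ncard = B1.ncard := hB0.ncard_eq_ncard_of_isBase hB1
  have hVU : (V \ U).Nonempty := by
    rw [nonempty_iff_ne_empty]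
    intro h
    have hsub : V ⊆ U := by
      intro y hy
      by_contra hyU
      exact (h ▸ (⟨hy, hyU⟩ : y ∈ V \ U) : y ∈ (∅ : Set α))
    have : V = U := eq_of_subset_of_ncard_le hsub (by omega) hUfin
    exact hb.2 (this ▸ hb.1)
  set X := U \ {b} with hXdef
  have hXE : X ⊆ M.E := diff_subset.trans hUE
  have hXfin : X.Finite := hUfin.subset diff_subset
  have hXcard : X.ncard = B0.ncard := by
    rw [hXdef, ncard_diff_singleton_of_mem hb.1, hUcard]
    omega
  -- Key claim: there is c ∈ V \ U with insert c X spanning.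
  have key : ∃ c ∈ V \ U, M.Spanning (insert c X) := by
    by_cases hcl : V ⊆ M.closure X
    · have hXsp : M.Spanning X := by
        refine ⟨subset_antisymm (M.closure_subset_ground X) ?_, hXE⟩
        calc M.E = M.closure V := hVspan.closure_eq.symm
          _ ⊆ M.closure (M.closure X) := M.closure_subset_closure hcl
          _ = M.closure X := M.closure_closure X
      obtain ⟨c, hc⟩ := hVU
      exact ⟨c, hc, hXsp.superset (subset_insert _ _) (insert_subset (hVE hc.1) hXE)⟩
    · rw [not_subset] at hcl
      obtain ⟨c, hcV, hc⟩ := hcl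
      have hcX : c ∉ X := fun h => hc (M.subset_closure X hXE h)
      have hcU : c ∉ U := by
        intro h
        rcases eq_or_ne c b with rfl | hne
        · exact hb.2 hcV
        · exact hcX ⟨h, hne⟩
      obtain ⟨I, hI⟩ := M.exists_isBasis X hXE
      have hcI : c ∉ I := fun h => hcX (hI.subset h)
      have hcclI : c ∉ M.closure I := by rw [hI.closure_eq_closure]; exact hc
      have hJ : M.Indep (insert c I) := by
        rw [hI.indep.insert_indep_iff_of_notMem hcI]
        exact ⟨hVE hcV, hcclI⟩
      -- I has at least B0.ncard - 1 elements
      have hBb : M.Indep (B0 \ {b}) := hB0.indep.subset diff_subset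
      have hBbX : B0 \ {b} ⊆ X := diff_subset_diff_left (hUeq ▸ subset_union_left)
      obtain ⟨I', hI', hsub'⟩ := hBb.subset_isBasis_of_subset hBbX hXE
      have hII' : I.ncard = I'.ncard := by
        have := hI.encard_eq_encard hI'
        rw [ncard_def, ncard_def, this]
      have hIfin : I.Finite := hXfin.subset hI.subset
      have hI'fin : I'.Finite := hXfin.subset hI'.subset
      have hBbcard : (B0 \ {b}).ncard ≤ I'.ncard := ncard_le_ncard hsub' hI'fin
      have hBbge : B0.ncard - 1 ≤ (B0 \ {b}).ncard := by
        rcases em (b ∈ B0) with h | h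
        · rw [ncard_diff_singleton_of_mem h]
        · rw [diff_singleton_eq_self h]; omega
      obtain ⟨B2, hB2, hJB2⟩ := hJ.exists_isBase_superset
      have hB2card : B2.ncard = B0.ncard := hB2.ncard_eq_ncard_of_isBase hB0
      have hJcard : (insert c I).ncard = I.ncard + 1 := ncard_insert_of_notMem hcI hIfin
      have hB0pos : 1 ≤ B0.ncard := by
        by_contra h
        have hB0e : B0 = ∅ := by
          have := Nat.lt_one_iff.1 (Nat.lt_of_not_le h)
          exact (ncard_eq_zero (hfin.subset hB0.subset_ground)).1 this
        -- then C0 = ∅ too since bases are equicardinal, contradicting C0 \ B0 = {u}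
        have hC0e : C0 = ∅ := by
          have := hC0.ncard_eq_ncard_of_isBase hB0
          rw [hB0e, ncard_empty] at this
          exact (ncard_eq_zero (hfin.subset hC0.subset_ground)).1 this
        have : u ∈ C0 \ B0 := hu ▸ rfl
        rw [hC0e] at this
        exact this.1
      have hB2J : B2 = insert c I := by
        apply (eq_of_subset_of_ncard_le hJB2 ?_ (hfin.subset hB2.subset_ground)).symm
        omega
      have hJbase : M.IsBase (insert c I) := hB2J ▸ hB2
      refine ⟨c, ⟨hcV, hcU⟩, ?_⟩
      exact hJbase.spanning.superset (insert_subset_insert hI.subset)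
        (insert_subset (hVE hcV) hXE)
  -- Finish: from spanning W of the right cardinality, produce adjacency membership.
  obtain ⟨c, hcVU, hWsp⟩ := key
  set W := insert c X with hWdef
  have hcX : c ∉ X := fun h => hcVU.2 (diff_subset h)
  have hWE : W ⊆ M.E := insert_subset (hVE hcVU.1) hXE
  have hWfin : W.Finite := hfin.subset hWE
  have hWcard : W.ncard = B0.ncard + 1 := by
    rw [hWdef, ncard_insert_of_notMem hcX hXfin, hXcard]
  obtain ⟨B2, hB2, hB2W⟩ := hWsp.exists_isBase_subset
  have hB2card : B2.ncard = B0.ncard := hB2.ncard_eq_ncard_of_isBase hB0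
  have hB2fin : B2.Finite := hfin.subset hB2.subset_ground
  have hdiff : (W \ B2).ncard = 1 := by
    rw [ncard_diff hB2W hB2fin]
    omega
  obtain ⟨x, hx⟩ := ncard_eq_one.1 hdiff
  have hxW : x ∈ W ∧ x ∉ B2 := by
    have : x ∈ W \ B2 := hx ▸ rfl
    exact ⟨this.1, this.2⟩
  have hWeq : W = insert x B2 := by
    apply subset_antisymm
    · intro y hy
      rcases em (y ∈ B2) with h | h
      · exact Or.inr h
      · have : y ∈ W \ B2 := ⟨hy, h⟩
        rw [hx] at this
        exact Or.inl this
    · exact insert_subset hxW.1 hB2W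
  have hxind : M.Indep {x} := by
    rcases hWdef ▸ hxW.1 with h | h
    · exact h ▸ hVind c hcVU.1
    · exact hUind x (diff_subset h)
  refine ⟨c, hcVU, ?_⟩
  show W ∈ adjFam {B | M.IsBase B}
  rw [hWeq]
  exact insert_mem_adjFam hB2 hxW.2 hxind
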